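/- (Approximation Lemma I.) Assume k̄ satisfies assumptions (iii)–(vi), and additionally that for each r ∈ ℛ there exists ĉ^r ∈ ℝ^𝒴_+ with k̄^r(ĉ^r) > 0. Let I_0 : ℝ^𝒴_+ → [0,∞) be continuous. Given (c,w) ∈ W^{1,1}((0,T); ℝ^𝒴_+ × ℝ^ℛ_+) with ẇ ≥ 0 a.e., ċ = Γẇ a.e., and J(c,w) < ∞, there exists a family (c_δ,w_δ)_{δ∈(0,1)} of absolutely continuous pairs with values in ℝ^𝒴_+ × ℝ^ℛ_+, with ẇ_δ ≥ 0 and ċ_δ = Γẇ_δ a.e., such that as δ → 0: (i) c_δ(0) → c(0) and (c_δ,w_δ) → (c,w) in the hybrid sense; (ii) I_0(c_δ(0)) + J(c_δ,w_δ) → I_0(c(0)) + J(c,w); and (iii) for each fixed δ > 0, inf over t ∈ (0,T) and r ∈ ℛ of k̄^r(c_δ(t)) is strictly positive. -/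

import Mathlib

open MeasureTheory Real Set Filter Topology

/-- The Boltzmann entropy function `s(j|k)`, valued in `[0,∞]`. -/
noncomputable def bes (j k : ℝ) : ENNReal :=
  if j = 0 then ENNReal.ofReal k
  else if k = 0 then ⊤
  else ENNReal.ofReal (j * Real.log (j / k) - j + k)

/-- The nonnegative cone `ℝ^𝒴₊`. -/
def nonnegCone (𝒴 : Type*) : Set (𝒴 → ℝ) := {c | ∀ y, 0 ≤ c y}

/-- The stoichiometric simplex `S(c)`. -/
def stoichSimplex {𝒴 ℛ : Type*} [Fintype ℛ] (γ : ℛ → 𝒴 → ℝ) (c : 𝒴 → ℝ) :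
    Set (𝒴 → ℝ) :=
  {c' | (∃ w : ℛ → ℝ, (∀ r, 0 ≤ w r) ∧ c' = fun y => c y + ∑ r, w r * γ r y)
        ∧ ∀ y, 0 ≤ c' y}

/-- The fattened stoichiometric simplex `S_ε(c)`. -/
def stoichSimplexEps {𝒴 ℛ : Type*} [Fintype 𝒴] [Fintype ℛ]
    (γ : ℛ → 𝒴 → ℝ) (c : 𝒴 → ℝ) (ε : ℝ) : Set (𝒴 → ℝ) :=
  {c' | ∃ c₁ : 𝒴 → ℝ, ‖c₁ - c‖ ≤ ε ∧ c' ∈ stoichSimplex γ c₁}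

lemma measurable_bes : Measurable (fun p : ℝ × ℝ => bes p.1 p.2) := by
  unfold bes
  have h1 : MeasurableSet {p : ℝ × ℝ | p.1 = 0} :=
    measurableSet_eq_fun measurable_fst measurable_const
  have h2 : MeasurableSet {p : ℝ × ℝ | p.2 = 0} :=
    measurableSet_eq_fun measurable_snd measurable_const
  refine Measurable.ite h1 (ENNReal.measurable_ofReal.comp measurable_snd) ?_
  refine Measurable.ite h2 measurable_const ?_
  exact ENNReal.measurable_ofReal.comp
    (((measurable_fst.mul (Real.measurable_log.comp
      (measurable_fst.div measurable_snd))).sub measurable_fst).add measurable_snd)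

lemma s_nonneg {j k : ℝ} (hj : 0 < j) (hk : 0 < k) : 0 ≤ j * Real.log (j / k) - j + k := by
  have h := Real.log_le_sub_one_of_pos (show 0 < k / j by positivity)
  have h2 : Real.log (k / j) = - Real.log (j / k) := by
    rw [← Real.log_inv]; congr 1; field_simp
  rw [h2] at h
  have h3 : j * (-Real.log (j/k)) ≤ j * (k/j - 1) := mul_le_mul_of_nonneg_left h hj.le
  have h4 : j * (k/j - 1) = k - j := by field_simp
  nlinarith

lemma bes_pos_eq {j k : ℝ} (hj : j ≠ 0) (hk : k ≠ 0) :
    bes j k = ENNReal.ofReal (j * Real.log (j/k) - j + k) := by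
  rw [bes, if_neg hj, if_neg hk]

lemma tendsto_bes_pos {α : Type*} {l : Filter α} {jf kf : α → ℝ} {j k : ℝ}
    (hj : 0 < j) (hk : 0 < k) (hjf : Tendsto jf l (𝓝 j)) (hkf : Tendsto kf l (𝓝 k)) :
    Tendsto (fun a => bes (jf a) (kf a)) l (𝓝 (bes j k)) := by
  have hev : ∀ᶠ a in l,
      ENNReal.ofReal (jf a * Real.log (jf a / kf a) - jf a + kf a) = bes (jf a) (kf a) := by
    filter_upwards [hjf.eventually (eventually_gt_nhds hj),
      hkf.eventually (eventually_gt_nhds hk)] with a h1 h2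
    rw [bes_pos_eq h1.ne' h2.ne']
  rw [bes_pos_eq hj.ne' hk.ne']
  refine Tendsto.congr' hev ?_
  refine (ENNReal.continuous_ofReal.tendsto _).comp ?_
  have hlog : Tendsto (fun a => Real.log (jf a / kf a)) l (𝓝 (Real.log (j/k))) :=
    (Real.continuousAt_log (by positivity)).tendsto.comp (hjf.div hkf hk.ne')
  exact ((hjf.mul hlog).sub hjf).add hkf

lemma bes_bound {j k k' M θ : ℝ} (hj : 0 ≤ j) (hjk : j ≠ 0 → 0 < k) (hk2 : k / 2 ≤ k')
    (hk' : 0 < k') (hkM : k' ≤ M) (hθ0 : 0 ≤ θ) (hθ1 : θ ≤ 1) :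
    bes (θ * j) k' ≤ bes j k + ENNReal.ofReal (j * (1 + Real.log 2)) + ENNReal.ofReal M := by
  have hlog2 : 0 ≤ Real.log 2 := Real.log_nonneg one_le_two
  rcases (mul_nonneg hθ0 hj).eq_or_lt' with h0 | hpos
  · rw [bes, if_pos h0]
    calc ENNReal.ofReal k' ≤ ENNReal.ofReal M := ENNReal.ofReal_le_ofReal hkM
    _ ≤ _ := le_add_self
  · have hjpos : 0 < j := by
      rcases hj.eq_or_lt' with h | h
      · exfalso; rw [h, mul_zero] at hpos; exact lt_irrefl _ hpos
      · exact h
    have hθpos : 0 < θ := by nlinarith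
    have hk := hjk hjpos.ne'
    rw [bes_pos_eq hpos.ne' hk'.ne', bes_pos_eq hjpos.ne' hk.ne']
    have key : θ*j*Real.log (θ*j/k') - θ*j + k'
        ≤ (j*Real.log (j/k) - j + k) + (j*(1+Real.log 2) + M) := by
      have hs := s_nonneg hjpos hk
      rcases le_or_gt (θ*j) k' with hle | hgt
      · have hln : Real.log (θ*j/k') ≤ 0 :=
          Real.log_nonpos (by positivity) (by rw [div_le_one hk']; exact hle)
        nlinarith [mul_nonneg hjpos.le hlog2, mul_nonpos_of_nonneg_of_nonpos hpos.le hln]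
      · have hθjj : θ*j ≤ j := by nlinarith
        have hrat : θ*j/k' ≤ j/(k/2) := div_le_div₀ hj hθjj (by linarith) hk2
        have hl1 : Real.log (θ*j/k') ≤ Real.log (j/(k/2)) :=
          Real.log_le_log (by positivity) hrat
        have hlpos : 0 < Real.log (θ*j/k') := Real.log_pos (by rw [lt_div_iff₀ hk']; linarith)
        have hl2 : θ*j*Real.log (θ*j/k') ≤ j * Real.log (j/(k/2)) :=
          le_trans (mul_le_mul_of_nonneg_right hθjj hlpos.le)
            (mul_le_mul_of_nonneg_left hl1 hj)
        have hl3 : Real.log (j/(k/2)) = Real.log (j/k) + Real.log 2 := by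
          rw [show j/(k/2) = (j/k)*2 by field_simp,
            Real.log_mul (by positivity) two_ne_zero]
        have hl4 : j * Real.log (j/(k/2)) = j * Real.log (j/k) + j * Real.log 2 := by
          rw [hl3]; ring
        have hl5 : j*(1+Real.log 2) = j + j*Real.log 2 := by ring
        linarith
    calc ENNReal.ofReal (θ*j*Real.log (θ*j/k') - θ*j + k')
        ≤ ENNReal.ofReal ((j*Real.log (j/k) - j + k) + (j*(1+Real.log 2) + M)) :=
          ENNReal.ofReal_le_ofReal key
      _ ≤ ENNReal.ofReal (j*Real.log (j/k) - j + k)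
          + ENNReal.ofReal (j*(1+Real.log 2) + M) := ENNReal.ofReal_add_le
      _ ≤ _ := by rw [add_assoc]; exact add_le_add le_rfl ENNReal.ofReal_add_le

lemma tendsto_lintegral_filter_of_dominated_convergence'
    {α : Type*} [MeasurableSpace α] {μ : Measure α} {ι : Type*} {l : Filter ι}
    [l.IsCountablyGenerated] {F : ι → α → ENNReal} {f : α → ENNReal} (bound : α → ENNReal)
    (hF_meas : ∀ᶠ n in l, AEMeasurable (F n) μ)
    (h_bound : ∀ᶠ n in l, ∀ᵐ a ∂μ, F n a ≤ bound a)
    (h_fin : ∫⁻ a, bound a ∂μ ≠ ⊤)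
    (h_lim : ∀ᵐ a ∂μ, Tendsto (fun n => F n a) l (𝓝 (f a))) :
    Tendsto (fun n => ∫⁻ a, F n a ∂μ) l (𝓝 (∫⁻ a, f a ∂μ)) := by
  rw [tendsto_iff_seq_tendsto]
  intro x xl
  have hxl := tendsto_atTop'.mp xl
  obtain ⟨k, h⟩ := hxl _ (inter_mem hF_meas h_bound)
  simp only [Function.comp_def]
  rw [← tendsto_add_atTop_iff_nat k]
  refine tendsto_lintegral_of_dominated_convergence' (F := fun n => F (x (n + k))) bound
    (fun n => (h _ (Nat.le_add_left _ _)).1) (fun n => (h _ (Nat.le_add_left _ _)).2) h_fin ?_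
  filter_upwards [h_lim] with a ha
  exact (tendsto_add_atTop_iff_nat k).2 (ha.comp xl)

/-- Approximation Lemma I: under assumptions (iii)–(vi) on `k̄`,
assuming each reaction can have positive rate somewhere, and for continuous
`I₀ : ℝ^𝒴₊ → [0,∞)`, every `(c,w) ∈ W^{1,1}` with `ẇ ≥ 0`, `ċ = Γẇ` and
`J(c,w) < ∞` can be approximated by a family `(c_δ,w_δ)` of absolutely continuous
pairs such that `c_δ(0) → c(0)`, `(c_δ,w_δ) → (c,w)` in the hybrid sense,
`I₀(c_δ(0)) + J(c_δ,w_δ) → I₀(c(0)) + J(c,w)`, and for each `δ` the rates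
`k̄^r(c_δ(t))` are uniformly bounded away from `0`. -/
theorem stmt9
    {𝒴 ℛ : Type*} [Fintype 𝒴] [Fintype ℛ]
    (T : ℝ) (hT : 0 < T)
    (γ : ℛ → 𝒴 → ℝ)
    (kbar : (𝒴 → ℝ) → ℛ → ℝ)
    (hk_nonneg : ∀ c ∈ nonnegCone 𝒴, ∀ r, 0 ≤ kbar c r)
    -- (iii) C¹ regularity on the nonnegative cone
    (hk_C1 : ContDiffOn ℝ 1 kbar (nonnegCone 𝒴))
    -- (iv) boundedness of `k̄` and its derivative on fattened stoichiometric simplices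
    (hk_bdd : ∀ c ∈ nonnegCone 𝒴, ∀ ε > 0, ∃ M : ℝ,
      ∀ c' ∈ stoichSimplexEps γ c ε,
        ‖kbar c'‖ ≤ M ∧ ‖fderivWithin ℝ kbar (nonnegCone 𝒴) c'‖ ≤ M)
    -- (v) monotonicity
    (hk_mono : ∀ c chat : 𝒴 → ℝ, (∀ y, 0 ≤ c y) → (∀ y, c y ≤ chat y) →
      ∀ r, kbar c r ≤ kbar chat r)
    -- (vi) superhomogeneity
    (ψ : ℝ → ℝ) (hψ_mono : StrictMonoOn ψ (Set.Icc 0 1))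
    (hψ_bij : Set.BijOn ψ (Set.Icc 0 1) (Set.Icc 0 1))
    (hk_shom : ∀ c ∈ nonnegCone 𝒴, ∀ δ ∈ Set.Icc (0:ℝ) 1, ∀ r,
      ψ δ * kbar c r ≤ kbar (fun y => δ * c y) r)
    -- each reaction has positive rate somewhere
    (hk_pos : ∀ r : ℛ, ∃ chat ∈ nonnegCone 𝒴, 0 < kbar chat r)
    -- continuous nonnegative initial rate functional
    (I0 : (𝒴 → ℝ) → ℝ)
    (hI0_cont : ContinuousOn I0 (nonnegCone 𝒴))
    (hI0_nonneg : ∀ c ∈ nonnegCone 𝒴, 0 ≤ I0 c)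
    -- the given W^{1,1} pair
    (c : ℝ → 𝒴 → ℝ) (w : ℝ → ℛ → ℝ) (dc : ℝ → 𝒴 → ℝ) (dw : ℝ → ℛ → ℝ)
    (hdc_int : IntegrableOn dc (Set.Ioo 0 T))
    (hdw_int : IntegrableOn dw (Set.Ioo 0 T))
    (hc_AC : ∀ t ∈ Set.Icc (0:ℝ) T, c t = c 0 + ∫ s in (0:ℝ)..t, dc s)
    (hw_AC : ∀ t ∈ Set.Icc (0:ℝ) T, w t = w 0 + ∫ s in (0:ℝ)..t, dw s)
    (hpos : ∀ t ∈ Set.Icc (0:ℝ) T, (∀ y, 0 ≤ c t y) ∧ (∀ r, 0 ≤ w t r))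
    (hae : ∀ᵐ t ∂(volume.restrict (Set.Ioo (0:ℝ) T)),
      (∀ r, 0 ≤ dw t r) ∧ dc t = fun y => ∑ r, dw t r * γ r y)
    (hJ : (∫⁻ t in Set.Ioo (0:ℝ) T, ∑ r, bes (dw t r) (kbar (c t) r)) < ⊤) :
    ∃ (cd : ℝ → ℝ → 𝒴 → ℝ) (wd : ℝ → ℝ → ℛ → ℝ)
      (dcd : ℝ → ℝ → 𝒴 → ℝ) (dwd : ℝ → ℝ → ℛ → ℝ),
      -- each member of the family is an admissible absolutely continuous pair,
      -- with rates bounded away from zero (iii of the conclusion)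
      (∀ δ ∈ Set.Ioo (0:ℝ) 1,
        IntegrableOn (dcd δ) (Set.Ioo 0 T) ∧ IntegrableOn (dwd δ) (Set.Ioo 0 T)
        ∧ (∀ t ∈ Set.Icc (0:ℝ) T, cd δ t = cd δ 0 + ∫ s in (0:ℝ)..t, dcd δ s)
        ∧ (∀ t ∈ Set.Icc (0:ℝ) T, wd δ t = wd δ 0 + ∫ s in (0:ℝ)..t, dwd δ s)
        ∧ (∀ t ∈ Set.Icc (0:ℝ) T, (∀ y, 0 ≤ cd δ t y) ∧ (∀ r, 0 ≤ wd δ t r))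
        ∧ (∀ᵐ t ∂(volume.restrict (Set.Ioo (0:ℝ) T)),
            (∀ r, 0 ≤ dwd δ t r) ∧ dcd δ t = fun y => ∑ r, dwd δ t r * γ r y)
        ∧ ∃ κ > (0:ℝ), ∀ t ∈ Set.Ioo (0:ℝ) T, ∀ r, κ ≤ kbar (cd δ t) r)
      -- (i) convergence of initial values and hybrid convergence
      ∧ Tendsto (fun δ => cd δ 0) (𝓝[>] (0:ℝ)) (𝓝 (c 0))
      ∧ Tendsto (fun δ => ∫ t in Set.Ioo (0:ℝ) T, (‖cd δ t - c t‖ + ‖wd δ t - w t‖))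
          (𝓝[>] (0:ℝ)) (𝓝 0)
      ∧ (∀ φ : ℝ → ℛ → ℝ, Continuous φ → HasCompactSupport φ →
          tsupport φ ⊆ Set.Ioo 0 T →
          Tendsto (fun δ => ∫ t in Set.Ioo (0:ℝ) T, ∑ r, φ t r * dwd δ t r)
            (𝓝[>] (0:ℝ)) (𝓝 (∫ t in Set.Ioo (0:ℝ) T, ∑ r, φ t r * dw t r)))
      ∧ (∀ ξ : ℝ → 𝒴 → ℝ, Continuous ξ → HasCompactSupport ξ →
          tsupport ξ ⊆ Set.Ioo 0 T →
          Tendsto (fun δ => ∫ t in Set.Ioo (0:ℝ) T, ∑ y, ξ t y * dcd δ t y)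
            (𝓝[>] (0:ℝ)) (𝓝 (∫ t in Set.Ioo (0:ℝ) T, ∑ y, ξ t y * dc t y)))
      -- (ii) convergence of the rate functionals
      ∧ Tendsto
          (fun δ => ENNReal.ofReal (I0 (cd δ 0))
            + ∫⁻ t in Set.Ioo (0:ℝ) T, ∑ r, bes (dwd δ t r) (kbar (cd δ t) r))
          (𝓝[>] (0:ℝ))
          (𝓝 (ENNReal.ofReal (I0 (c 0))
            + ∫⁻ t in Set.Ioo (0:ℝ) T, ∑ r, bes (dw t r) (kbar (c t) r))) := by
  classical
  -- choose the reference positive-rate state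
  choose chat hchat1 hchat2 using hk_pos
  set ch : 𝒴 → ℝ := fun y => ∑ r, chat r y with hch_def
  have hch_cone : ∀ y, 0 ≤ ch y := fun y => Finset.sum_nonneg fun r _ => hchat1 r y
  have hch_ge : ∀ r y, chat r y ≤ ch y := fun r y =>
    Finset.single_le_sum (fun i (_ : i ∈ Finset.univ) => hchat1 i y) (Finset.mem_univ r)
  have hch_pos : ∀ r, 0 < kbar ch r := fun r =>
    lt_of_lt_of_le (hchat2 r) (hk_mono (chat r) ch (hchat1 r) (fun y => hch_ge r y) r)
  obtain ⟨κ0, hκ0, hκ0le⟩ : ∃ κ0 > (0:ℝ), ∀ r, κ0 ≤ kbar ch r := by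
    rcases isEmpty_or_nonempty ℛ with h | h
    · exact ⟨1, one_pos, fun r => isEmptyElim r⟩
    · refine ⟨Finset.univ.inf' Finset.univ_nonempty (kbar ch), ?_,
        fun r => Finset.inf'_le _ (Finset.mem_univ r)⟩
      rw [gt_iff_lt, Finset.lt_inf'_iff]
      exact fun r _ => hch_pos r
  -- facts about ψ
  have hmem01 : (0:ℝ) ∈ Set.Icc (0:ℝ) 1 := Set.left_mem_Icc.mpr zero_le_one
  have hmem11 : (1:ℝ) ∈ Set.Icc (0:ℝ) 1 := Set.right_mem_Icc.mpr zero_le_one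
  have hψ00 : 0 ≤ ψ 0 := (hψ_bij.mapsTo hmem01).1
  have hψpos : ∀ δ ∈ Set.Ioc (0:ℝ) 1, 0 < ψ δ := fun δ hδ =>
    lt_of_le_of_lt hψ00 (hψ_mono hmem01 ⟨hδ.1.le, hδ.2⟩ hδ.1)
  have hψ1 : ψ 1 = 1 := by
    obtain ⟨z, hz, hz1⟩ := hψ_bij.surjOn hmem11
    rcases hz.2.eq_or_lt with h | h
    · rwa [h] at hz1
    · exfalso
      have h2 := hψ_mono hz hmem11 h
      have h1 : ψ 1 ≤ 1 := (hψ_bij.mapsTo hmem11).2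
      rw [hz1] at h2; linarith
  obtain ⟨x, hx_mem, hxval⟩ := hψ_bij.surjOn (show (1/2:ℝ) ∈ Set.Icc (0:ℝ) 1 by norm_num)
  have hx1 : x < 1 := hx_mem.2.lt_of_ne (by
    intro h; rw [h, hψ1] at hxval; norm_num at hxval)
  have hψhalf : ∀ δ : ℝ, 0 < δ → δ < 1 - x → 1/2 ≤ ψ (1-δ) := by
    intro δ h1 h2
    have hmem : (1-δ) ∈ Set.Icc (0:ℝ) 1 := ⟨by linarith [hx_mem.1], by linarith⟩
    have h3 := hψ_mono hx_mem hmem (by linarith)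
    rw [hxval] at h3; linarith
  -- continuity of c on [0,T]
  have h0T : (0:ℝ) ∈ Set.Icc (0:ℝ) T := Set.left_mem_Icc.mpr hT.le
  have hc_cont : ContinuousOn c (Set.Icc 0 T) := by
    have hdc_int' : IntegrableOn dc (Set.Icc 0 T) := by
      rwa [integrableOn_Icc_iff_integrableOn_Ioo]
    have hprim : ContinuousOn (fun t => ∫ s in (0:ℝ)..t, dc s) (Set.Icc 0 T) := by
      have h := intervalIntegral.continuousOn_primitive_interval
        (a := (0:ℝ)) (b := T) (μ := volume) (f := dc)
        (by rwa [Set.uIcc_of_le hT.le])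
      rwa [Set.uIcc_of_le hT.le] at h
    exact (continuousOn_const.add hprim).congr fun t ht => hc_AC t ht
  -- the approximating family
  set cdf : ℝ → ℝ → 𝒴 → ℝ := fun δ t => (1-δ) • c t + δ • ch with hcdf_def
  have happly : ∀ δ t y, cdf δ t y = (1-δ) * c t y + δ * ch y := fun δ t y => rfl
  have hcone : ∀ δ ∈ Set.Icc (0:ℝ) 1, ∀ t ∈ Set.Icc (0:ℝ) T, ∀ y, 0 ≤ cdf δ t y := by
    intro δ hδ t ht y
    rw [happly]
    exact add_nonneg (mul_nonneg (by linarith [hδ.2]) ((hpos t ht).1 y))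
      (mul_nonneg hδ.1 (hch_cone y))
  have hlow : ∀ δ ∈ Set.Ioc (0:ℝ) 1, ∀ t ∈ Set.Icc (0:ℝ) T, ∀ r,
      ψ δ * κ0 ≤ kbar (cdf δ t) r := by
    intro δ hδ t ht r
    have h1 : kbar (fun y => δ * ch y) r ≤ kbar (cdf δ t) r := by
      refine hk_mono _ _ (fun y => mul_nonneg hδ.1.le (hch_cone y)) (fun y => ?_) r
      rw [happly]
      nlinarith [(hpos t ht).1 y, hch_cone y, hδ.2]
    have h2 : ψ δ * kbar ch r ≤ kbar (fun y => δ * ch y) r :=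
      hk_shom ch hch_cone δ ⟨hδ.1.le, hδ.2⟩ r
    have h3 : ψ δ * κ0 ≤ ψ δ * kbar ch r :=
      mul_le_mul_of_nonneg_left (hκ0le r) (hψpos δ hδ).le
    linarith
  have hlow2 : ∀ δ ∈ Set.Ioc (0:ℝ) 1, ∀ t ∈ Set.Icc (0:ℝ) T, ∀ r,
      ψ (1-δ) * kbar (c t) r ≤ kbar (cdf δ t) r := by
    intro δ hδ t ht r
    have hc0 := (hpos t ht).1
    have h1 : kbar (fun y => (1-δ) * c t y) r ≤ kbar (cdf δ t) r := by
      refine hk_mono _ _ (fun y => mul_nonneg (by linarith [hδ.2]) (hc0 y)) (fun y => ?_) r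
      rw [happly]
      nlinarith [hch_cone y, hδ.1]
    have h2 := hk_shom (c t) hc0 (1-δ) ⟨by linarith [hδ.2], by linarith [hδ.1]⟩ r
    linarith
  -- uniform upper bound
  have hcch_cont : ContinuousOn (fun t => kbar (c t + ch)) (Set.Icc 0 T) := by
    refine hk_C1.continuousOn.comp (hc_cont.add continuousOn_const) (fun t ht => ?_)
    exact fun y => add_nonneg ((hpos t ht).1 y) (hch_cone y)
  obtain ⟨M, hM⟩ := isCompact_Icc.exists_bound_of_continuousOn hcch_cont
  have hM0 : 0 ≤ M := le_trans (norm_nonneg _) (hM 0 h0T)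
  have hup : ∀ δ ∈ Set.Icc (0:ℝ) 1, ∀ t ∈ Set.Icc (0:ℝ) T, ∀ r, kbar (cdf δ t) r ≤ M := by
    intro δ hδ t ht r
    have h1 : kbar (cdf δ t) r ≤ kbar (c t + ch) r := by
      refine hk_mono _ _ (hcone δ hδ t ht) (fun y => ?_) r
      rw [happly]
      have := (hpos t ht).1 y; have := hch_cone y
      simp only [Pi.add_apply]
      nlinarith [hδ.1, hδ.2]
    calc kbar (cdf δ t) r ≤ kbar (c t + ch) r := h1
    _ ≤ |kbar (c t + ch) r| := le_abs_self _
    _ ≤ ‖kbar (c t + ch)‖ := by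
        rw [← Real.norm_eq_abs]; exact norm_le_pi_norm _ r
    _ ≤ M := hM t ht
  -- measurability helpers
  have hdw_aem : AEMeasurable dw (volume.restrict (Set.Ioo (0:ℝ) T)) := hdw_int.aemeasurable
  have hdwr : ∀ r, AEMeasurable (fun t => dw t r) (volume.restrict (Set.Ioo (0:ℝ) T)) :=
    fun r => (measurable_pi_apply r).comp_aemeasurable hdw_aem
  have hpath_aem : ∀ p : ℝ → 𝒴 → ℝ, ContinuousOn p (Set.Icc 0 T) →
      (∀ t ∈ Set.Icc (0:ℝ) T, ∀ y, 0 ≤ p t y) → ∀ r,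
      AEMeasurable (fun t => kbar (p t) r) (volume.restrict (Set.Ioo (0:ℝ) T)) := by
    intro p hp hmem r
    have h1 : ContinuousOn (fun t => kbar (p t) r) (Set.Icc 0 T) :=
      (continuous_apply r).comp_continuousOn
        (hk_C1.continuousOn.comp hp fun t ht => hmem t ht)
    exact (h1.mono Set.Ioo_subset_Icc_self).aemeasurable measurableSet_Ioo
  have hsum_aem : ∀ (p : ℝ → 𝒴 → ℝ) (θ : ℝ), ContinuousOn p (Set.Icc 0 T) →
      (∀ t ∈ Set.Icc (0:ℝ) T, ∀ y, 0 ≤ p t y) →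
      AEMeasurable (fun t => ∑ r, bes (θ * dw t r) (kbar (p t) r))
        (volume.restrict (Set.Ioo (0:ℝ) T)) := by
    intro p θ hp hmem
    refine Finset.aemeasurable_fun_sum _ fun r _ => ?_
    exact measurable_bes.comp_aemeasurable
      (((hdwr r).const_mul θ).prodMk (hpath_aem p hp hmem r))
  have G_aem : AEMeasurable (fun t => ∑ r, bes (dw t r) (kbar (c t) r))
      (volume.restrict (Set.Ioo (0:ℝ) T)) := by
    have := hsum_aem c 1 hc_cont (fun t ht => (hpos t ht).1)
    simpa using this
  -- a.e. regular points
  have hae_good : ∀ᵐ t ∂(volume.restrict (Set.Ioo (0:ℝ) T)),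
      t ∈ Set.Ioo (0:ℝ) T ∧ (∀ r, 0 ≤ dw t r) ∧
      (∀ r, dw t r ≠ 0 → 0 < kbar (c t) r) := by
    filter_upwards [hae, ae_lt_top' G_aem hJ.ne, ae_restrict_mem measurableSet_Ioo]
      with t h1 h2 h3
    refine ⟨h3, h1.1, fun r hr => ?_⟩
    have hle : bes (dw t r) (kbar (c t) r) ≤ ∑ r', bes (dw t r') (kbar (c t) r') :=
      Finset.single_le_sum (f := fun r' => bes (dw t r') (kbar (c t) r'))
        (fun i _ => zero_le) (Finset.mem_univ r)
    have hne : bes (dw t r) (kbar (c t) r) ≠ ⊤ := ne_top_of_le_ne_top h2.ne hle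
    by_contra hk
    push_neg at hk
    have hk0 : kbar (c t) r = 0 :=
      le_antisymm hk (hk_nonneg (c t) (hpos t (Set.Ioo_subset_Icc_self h3)).1 r)
    rw [bes, if_neg hr, if_pos hk0] at hne
    exact hne rfl
  -- package the family
  refine ⟨cdf, fun δ t => (1-δ) • w t, fun δ t => (1-δ) • dc t, fun δ t => (1-δ) • dw t,
    ?_, ?_, ?_, ?_, ?_, ?_⟩
  · -- per-δ admissibility
    rintro δ ⟨hδ0, hδ1⟩
    refine ⟨hdc_int.smul ((1-δ):ℝ), hdw_int.smul ((1-δ):ℝ), ?_, ?_, ?_, ?_, ?_⟩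
    · intro t ht
      show cdf δ t = cdf δ 0 + ∫ s in (0:ℝ)..t, (1-δ) • dc s
      rw [intervalIntegral.integral_smul, hcdf_def]
      simp only
      rw [hc_AC t ht, smul_add]
      abel
    · intro t ht
      show (1-δ) • w t = (1-δ) • w 0 + ∫ s in (0:ℝ)..t, (1-δ) • dw s
      rw [intervalIntegral.integral_smul, hw_AC t ht, smul_add]
    · intro t ht
      exact ⟨hcone δ ⟨hδ0.le, hδ1.le⟩ t ht, fun r =>
        mul_nonneg (by linarith) ((hpos t ht).2 r)⟩
    · filter_upwards [hae] with t h
      refine ⟨fun r => mul_nonneg (by linarith) (h.1 r), ?_⟩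
      funext y
      simp only [Pi.smul_apply, smul_eq_mul, h.2, Finset.mul_sum]
      exact Finset.sum_congr rfl fun r _ => by ring
    · exact ⟨ψ δ * κ0, mul_pos (hψpos δ ⟨hδ0, hδ1.le⟩) hκ0,
        fun t ht r => hlow δ ⟨hδ0, hδ1.le⟩ t (Set.Ioo_subset_Icc_self ht) r⟩
  · -- initial values converge
    have h : Continuous (fun δ : ℝ => (1-δ) • c 0 + δ • ch) :=
      ((continuous_const.sub continuous_id).smul continuous_const).add
        (continuous_id.smul continuous_const)
    have h2 := (h.tendsto 0).mono_left (nhdsWithin_le_nhds (s := Set.Ioi (0:ℝ)))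
    simpa using h2
  · -- L¹ convergence
    have key : ∀ δ : ℝ,
        (∫ t in Set.Ioo (0:ℝ) T, (‖cdf δ t - c t‖ + ‖(1-δ) • w t - w t‖))
        = |δ| * ∫ t in Set.Ioo (0:ℝ) T, (‖ch - c t‖ + ‖w t‖) := by
      intro δ
      have hpt : ∀ t, ‖cdf δ t - c t‖ + ‖(1-δ) • w t - w t‖
          = |δ| * (‖ch - c t‖ + ‖w t‖) := by
        intro t
        have e1 : cdf δ t - c t = δ • (ch - c t) := by
          rw [hcdf_def]; simp only
          rw [sub_smul, one_smul, smul_sub]; abel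
        have e2 : (1-δ) • w t - w t = (-δ) • w t := by
          rw [sub_smul, one_smul, neg_smul]; abel
        rw [e1, e2, norm_smul, norm_smul, Real.norm_eq_abs, Real.norm_eq_abs, abs_neg]
        ring
      simp_rw [hpt]
      rw [integral_const_mul]
    refine Tendsto.congr (fun δ => (key δ).symm) ?_
    have h := ((continuous_abs.tendsto (0:ℝ)).mul_const
      (∫ t in Set.Ioo (0:ℝ) T, (‖ch - c t‖ + ‖w t‖))).mono_left (nhdsWithin_le_nhds (s := Set.Ioi (0:ℝ)))
    simpa using h
  · -- weak convergence of dwd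
    intro φ hφc hφs hφsupp
    have key : ∀ δ : ℝ,
        (∫ t in Set.Ioo (0:ℝ) T, ∑ r, φ t r * ((1-δ) • dw t) r)
        = (1-δ) * ∫ t in Set.Ioo (0:ℝ) T, ∑ r, φ t r * dw t r := by
      intro δ
      have hpt : ∀ t, (∑ r, φ t r * ((1-δ) • dw t) r)
          = (1-δ) * ∑ r, φ t r * dw t r := by
        intro t
        rw [Finset.mul_sum]
        exact Finset.sum_congr rfl fun r _ => by
          simp only [Pi.smul_apply, smul_eq_mul]; ring
      simp_rw [hpt]
      rw [integral_const_mul]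
    refine Tendsto.congr (fun δ => (key δ).symm) ?_
    have hcont : Continuous (fun δ : ℝ =>
        (1-δ) * ∫ t in Set.Ioo (0:ℝ) T, ∑ r, φ t r * dw t r) :=
      (continuous_const.sub continuous_id).mul continuous_const
    have h := (hcont.tendsto 0).mono_left (nhdsWithin_le_nhds (s := Set.Ioi (0:ℝ)))
    simpa using h
  · -- weak convergence of dcd
    intro ξ hξc hξs hξsupp
    have key : ∀ δ : ℝ,
        (∫ t in Set.Ioo (0:ℝ) T, ∑ y, ξ t y * ((1-δ) • dc t) y)
        = (1-δ) * ∫ t in Set.Ioo (0:ℝ) T, ∑ y, ξ t y * dc t y := by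
      intro δ
      have hpt : ∀ t, (∑ y, ξ t y * ((1-δ) • dc t) y)
          = (1-δ) * ∑ y, ξ t y * dc t y := by
        intro t
        rw [Finset.mul_sum]
        exact Finset.sum_congr rfl fun y _ => by
          simp only [Pi.smul_apply, smul_eq_mul]; ring
      simp_rw [hpt]
      rw [integral_const_mul]
    refine Tendsto.congr (fun δ => (key δ).symm) ?_
    have hcont : Continuous (fun δ : ℝ =>
        (1-δ) * ∫ t in Set.Ioo (0:ℝ) T, ∑ y, ξ t y * dc t y) :=
      (continuous_const.sub continuous_id).mul continuous_const
    have h := (hcont.tendsto 0).mono_left (nhdsWithin_le_nhds (s := Set.Ioi (0:ℝ)))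
    simpa using h
  · -- convergence of the rate functionals
    refine Tendsto.add ?_ ?_
    · -- I0 part
      have hc0mem : c 0 ∈ nonnegCone 𝒴 := (hpos 0 h0T).1
      have h1 : Tendsto (fun δ => cdf δ 0) (𝓝[>] (0:ℝ)) (𝓝[nonnegCone 𝒴] (c 0)) := by
        rw [tendsto_nhdsWithin_iff]
        constructor
        · have h : Continuous (fun δ : ℝ => (1-δ) • c 0 + δ • ch) :=
            ((continuous_const.sub continuous_id).smul continuous_const).add
              (continuous_id.smul continuous_const)
          have h2 := (h.tendsto 0).mono_left (nhdsWithin_le_nhds (s := Set.Ioi (0:ℝ)))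
          simpa using h2
        · filter_upwards [Ioo_mem_nhdsGT_of_mem (Set.left_mem_Ico.mpr one_pos)] with δ hδ
          exact hcone δ ⟨hδ.1.le, hδ.2.le⟩ 0 h0T
      exact (ENNReal.continuous_ofReal.tendsto _).comp
        (((hI0_cont (c 0) hc0mem).tendsto).comp h1)
    · -- lintegral part via dominated convergence
      set d0 : ℝ := min (1-x) 1 with hd0_def
      have hd0 : 0 < d0 := lt_min (by linarith) one_pos
      refine _root_.tendsto_lintegral_filter_of_dominated_convergence'
        (fun t => (∑ r, bes (dw t r) (kbar (c t) r))
          + (∑ r, ENNReal.ofReal (dw t r * (1 + Real.log 2)))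
          + (Fintype.card ℛ : ENNReal) * ENNReal.ofReal M) ?_ ?_ ?_ ?_
      · -- eventual AE-measurability
        filter_upwards [Ioo_mem_nhdsGT_of_mem (Set.left_mem_Ico.mpr one_pos)] with δ hδ
        have hcont : ContinuousOn (fun t => cdf δ t) (Set.Icc 0 T) :=
          (hc_cont.const_smul ((1-δ):ℝ)).add continuousOn_const
        exact hsum_aem (cdf δ) (1-δ) hcont (fun t ht => hcone δ ⟨hδ.1.le, hδ.2.le⟩ t ht)
      · -- eventual domination
        filter_upwards [Ioo_mem_nhdsGT_of_mem (Set.left_mem_Ico.mpr hd0)] with δ hδ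
        have hδ0 : 0 < δ := hδ.1
        have hδ1x : δ < 1 - x := lt_of_lt_of_le hδ.2 (min_le_left _ _)
        have hδ1 : δ < 1 := lt_of_lt_of_le hδ.2 (min_le_right _ _)
        filter_upwards [hae_good] with t ht
        obtain ⟨htI, hdw0, hdwk⟩ := ht
        have htc : t ∈ Set.Icc (0:ℝ) T := Set.Ioo_subset_Icc_self htI
        have hper : ∀ r ∈ (Finset.univ : Finset ℛ),
            bes (((1-δ) • dw t) r) (kbar (cdf δ t) r)
            ≤ bes (dw t r) (kbar (c t) r)
              + ENNReal.ofReal (dw t r * (1 + Real.log 2)) + ENNReal.ofReal M := by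
          intro r _
          show bes ((1-δ) * dw t r) (kbar (cdf δ t) r) ≤ _
          have hk2 : kbar (c t) r / 2 ≤ kbar (cdf δ t) r := by
            have ha := hψhalf δ hδ0 hδ1x
            have hb := hlow2 δ ⟨hδ0, hδ1.le⟩ t htc r
            have hc' := hk_nonneg (c t) (hpos t htc).1 r
            nlinarith
          have hk' : 0 < kbar (cdf δ t) r :=
            lt_of_lt_of_le (mul_pos (hψpos δ ⟨hδ0, hδ1.le⟩) hκ0)
              (hlow δ ⟨hδ0, hδ1.le⟩ t htc r)
          have hkM := hup δ ⟨hδ0.le, hδ1.le⟩ t htc r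
          exact bes_bound (hdw0 r) (fun h => hdwk r h) hk2 hk' hkM
            (by linarith) (by linarith)
        refine le_trans (Finset.sum_le_sum hper) ?_
        rw [Finset.sum_add_distrib, Finset.sum_add_distrib, Finset.sum_const,
          Finset.card_univ, nsmul_eq_mul]
      · -- finiteness of bound
        have hHaem : AEMeasurable
            (fun t => ∑ r, ENNReal.ofReal (dw t r * (1 + Real.log 2)))
            (volume.restrict (Set.Ioo (0:ℝ) T)) :=
          Finset.aemeasurable_fun_sum _ fun r _ =>
            ENNReal.measurable_ofReal.comp_aemeasurable ((hdwr r).mul_const _)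
        rw [lintegral_add_left' (f := fun t => (∑ r, bes (dw t r) (kbar (c t) r))
          + (∑ r, ENNReal.ofReal (dw t r * (1 + Real.log 2)))) (G_aem.add hHaem), lintegral_add_left' G_aem]
        refine ENNReal.add_ne_top.mpr ⟨ENNReal.add_ne_top.mpr ⟨hJ.ne, ?_⟩, ?_⟩
        · have haem2 : ∀ r ∈ Finset.univ,
              AEMeasurable (fun t => ENNReal.ofReal (dw t r * (1 + Real.log 2)))
                (volume.restrict (Set.Ioo (0:ℝ) T)) := fun r _ =>
            ENNReal.measurable_ofReal.comp_aemeasurable ((hdwr r).mul_const _)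
          rw [lintegral_finset_sum' _ haem2]
          refine (ENNReal.sum_lt_top.mpr fun r _ => ?_).ne
          have hint : Integrable (fun t => dw t r * (1 + Real.log 2))
              (volume.restrict (Set.Ioo (0:ℝ) T)) := by
            have h := (ContinuousLinearMap.proj (R := ℝ) (φ := fun _ : ℛ => ℝ)
              r).integrable_comp hdw_int
            exact h.mul_const _
          exact hint.lintegral_lt_top
        · rw [lintegral_const, Measure.restrict_apply_univ, Real.volume_Ioo]
          exact ENNReal.mul_ne_top
            (ENNReal.mul_ne_top (ENNReal.natCast_ne_top _) ENNReal.ofReal_ne_top)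
            ENNReal.ofReal_ne_top
      · -- a.e. pointwise convergence
        filter_upwards [hae_good] with t ht
        obtain ⟨htI, hdw0, hdwk⟩ := ht
        have htc : t ∈ Set.Icc (0:ℝ) T := Set.Ioo_subset_Icc_self htI
        refine tendsto_finset_sum _ fun r _ => ?_
        have hkδ : Tendsto (fun δ => kbar (cdf δ t) r) (𝓝[>] (0:ℝ))
            (𝓝 (kbar (c t) r)) := by
          have hcd : Tendsto (fun δ => cdf δ t) (𝓝[>] (0:ℝ)) (𝓝 (c t)) := by
            have h : Continuous (fun δ : ℝ => (1-δ) • c t + δ • ch) :=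
              ((continuous_const.sub continuous_id).smul continuous_const).add
                (continuous_id.smul continuous_const)
            have h2 := (h.tendsto 0).mono_left (nhdsWithin_le_nhds (s := Set.Ioi (0:ℝ)))
            simpa using h2
          have hcd' : Tendsto (fun δ => cdf δ t) (𝓝[>] (0:ℝ))
              (𝓝[nonnegCone 𝒴] (c t)) := by
            rw [tendsto_nhdsWithin_iff]
            refine ⟨hcd, ?_⟩
            filter_upwards [Ioo_mem_nhdsGT_of_mem (Set.left_mem_Ico.mpr one_pos)] with δ hδ
            exact hcone δ ⟨hδ.1.le, hδ.2.le⟩ t htc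
          have h3 := (hk_C1.continuousOn (c t) (hpos t htc).1).tendsto.comp hcd'
          exact ((continuous_apply r).tendsto _).comp h3
        rcases eq_or_ne (dw t r) 0 with h0 | h0
        · have hfun : ∀ δ : ℝ, bes (((1-δ) • dw t) r) (kbar (cdf δ t) r)
              = ENNReal.ofReal (kbar (cdf δ t) r) := by
            intro δ
            show bes ((1-δ) * dw t r) _ = _
            rw [h0, mul_zero, bes, if_pos rfl]
          have hlim : bes (dw t r) (kbar (c t) r) = ENNReal.ofReal (kbar (c t) r) := by
            rw [h0, bes, if_pos rfl]
          rw [hlim]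
          exact Tendsto.congr (fun δ => (hfun δ).symm)
            ((ENNReal.continuous_ofReal.tendsto _).comp hkδ)
        · have hj : 0 < dw t r := lt_of_le_of_ne (hdw0 r) (Ne.symm h0)
          have hjf : Tendsto (fun δ : ℝ => ((1-δ) • dw t) r) (𝓝[>] (0:ℝ))
              (𝓝 (dw t r)) := by
            have h : Continuous (fun δ : ℝ => (1-δ) * dw t r) :=
              (continuous_const.sub continuous_id).mul continuous_const
            have h2 := (h.tendsto 0).mono_left (nhdsWithin_le_nhds (s := Set.Ioi (0:ℝ)))
            simpa using h2
          exact tendsto_bes_pos hj (hdwk r h0) hjf hkδ
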